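/- For every k ≥ 1 and every x > x̄_k, one has V_k(x) > V_{k−1}(x). -/

import Mathlib

open MeasureTheory

open MeasureTheory

/-- The recursively defined value functions for the Canadised American put:
`V_0(x) = (K − e^x)⁺` and `V_k(x) = max{(K − e^x)⁺, e^{−r/n} E[V_{k−1}(x + Y)]}`. -/
noncomputable def putV {Ω : Type*} [MeasurableSpace Ω] (P : Measure Ω) (Y : Ω → ℝ)
    (K r : ℝ) (n : ℕ) : ℕ → ℝ → ℝ
  | 0 => fun x => max (K - Real.exp x) 0
  | k + 1 => fun x =>
      max (max (K - Real.exp x) 0)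
        (Real.exp (-(r / n)) * ∫ ω, putV P Y K r n k (x + Y ω) ∂P)

set_option linter.unusedSectionVars false
set_option linter.unusedVariables false
section S16aux

variable {Ω : Type*} [MeasurableSpace Ω] {P : Measure Ω} [IsProbabilityMeasure P]
  {K r : ℝ} {n : ℕ} {Y : Ω → ℝ}

lemma putV_succ (k : ℕ) (x : ℝ) :
    putV P Y K r n (k + 1) x =
      max (max (K - Real.exp x) 0)
        (Real.exp (-(r / n)) * ∫ ω, putV P Y K r n k (x + Y ω) ∂P) := rfl

lemma putV_nonneg (k : ℕ) (x : ℝ) : 0 ≤ putV P Y K r n k x := by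
  cases k with
  | zero => exact le_max_right _ _
  | succ k => exact le_trans (le_max_right _ _) (le_max_left _ _)

lemma putV_ge (k : ℕ) (x : ℝ) : max (K - Real.exp x) 0 ≤ putV P Y K r n k x := by
  cases k with
  | zero => exact le_rfl
  | succ k => exact le_max_left _ _

lemma putV_le (hK : 0 < K) (hr : 0 ≤ r) : ∀ k x, putV P Y K r n k x ≤ K := by
  intro k
  induction k with
  | zero =>
    intro x
    exact max_le (by linarith [Real.exp_pos x]) hK.le
  | succ k ih =>
    intro x
    rw [putV_succ]
    apply max_le (max_le (by linarith [Real.exp_pos x]) hK.le)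
    have h1 : Real.exp (-(r / n)) ≤ 1 := by
      rw [Real.exp_le_one_iff]
      exact neg_nonpos.mpr (by positivity)
    have h2 : ‖∫ ω, putV P Y K r n k (x + Y ω) ∂P‖ ≤ K * (P Set.univ).toReal := by
      apply norm_integral_le_of_norm_le_const (C := K)
      filter_upwards with ω
      rw [Real.norm_eq_abs, abs_le]
      exact ⟨by linarith [putV_nonneg (P := P) (Y := Y) (K := K) (r := r) (n := n) k (x + Y ω)], ih _⟩
    simp only [measure_univ, ENNReal.toReal_one, mul_one, Real.norm_eq_abs] at h2
    have := (abs_le.mp h2).2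
    nlinarith [Real.exp_pos (-(r / n))]


lemma putV_continuous (hK : 0 < K) (hr : 0 ≤ r) (hY : Measurable Y) :
    ∀ k, Continuous (putV P Y K r n k) := by
  intro k
  induction k with
  | zero => exact (continuous_const.sub Real.continuous_exp).max continuous_const
  | succ k ih =>
    show Continuous fun x => max (max (K - Real.exp x) 0)
        (Real.exp (-(r / n)) * ∫ ω, putV P Y K r n k (x + Y ω) ∂P)
    apply Continuous.max
      ((continuous_const.sub Real.continuous_exp).max continuous_const)
    apply continuous_const.mul
    apply continuous_of_dominated (bound := fun _ => K)
    · intro x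
      exact (ih.measurable.comp (measurable_const.add hY)).aestronglyMeasurable
    · intro x
      filter_upwards with ω
      rw [Real.norm_eq_abs, abs_le]
      exact ⟨by linarith [putV_nonneg (P := P) (Y := Y) (K := K) (r := r) (n := n) k (x + Y ω)],
        putV_le hK hr k _⟩
    · exact integrable_const K
    · filter_upwards with ω
      exact ih.comp (continuous_id.add continuous_const)

lemma putV_integrable (hK : 0 < K) (hr : 0 ≤ r) (hY : Measurable Y) (k : ℕ) (x : ℝ) :
    Integrable (fun ω => putV P Y K r n k (x + Y ω)) P := by
  refine (integrable_const K).mono'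
    (((putV_continuous hK hr hY k).measurable.comp (measurable_const.add hY)).aestronglyMeasurable)
    ?_
  filter_upwards with ω
  rw [Real.norm_eq_abs, abs_le]
  exact ⟨by linarith [putV_nonneg (P := P) (Y := Y) (K := K) (r := r) (n := n) k (x + Y ω)],
    putV_le hK hr k _⟩

lemma putV_mono (hK : 0 < K) (hr : 0 ≤ r) (hY : Measurable Y) :
    ∀ k x, putV P Y K r n k x ≤ putV P Y K r n (k + 1) x := by
  intro k
  induction k with
  | zero => intro x; exact le_max_left _ _
  | succ k ih =>
    intro x
    rw [putV_succ, putV_succ]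
    apply max_le_max le_rfl
    apply mul_le_mul_of_nonneg_left _ (Real.exp_pos _).le
    exact integral_mono (putV_integrable hK hr hY k x) (putV_integrable hK hr hY (k+1) x)
      (fun ω => ih _)

lemma putV_integral_pos (hK : 0 < K) (hr : 0 ≤ r) (hY : Measurable Y)
    (hYneg : ∀ y : ℝ, 0 < P {ω | Y ω < y}) (k : ℕ) (x : ℝ) :
    0 < ∫ ω, putV P Y K r n k (x + Y ω) ∂P := by
  set A : Set Ω := {ω | Y ω < Real.log (K / 2) - x} with hA
  have hAm : MeasurableSet A := hY measurableSet_Iio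
  have hgle : ∀ ω, A.indicator (fun _ => K / 2) ω ≤ putV P Y K r n k (x + Y ω) := by
    intro ω
    by_cases hω : ω ∈ A
    · rw [Set.indicator_of_mem hω]
      refine le_trans ?_ (le_trans (le_max_left _ _) (putV_ge k (x + Y ω)))
      have : x + Y ω < Real.log (K / 2) := by
        have := hω; simp only [hA, Set.mem_setOf_eq] at this; linarith
      have h2 : Real.exp (x + Y ω) < K / 2 := by
        calc Real.exp (x + Y ω) < Real.exp (Real.log (K / 2)) := Real.exp_lt_exp.mpr this
        _ = K / 2 := Real.exp_log (by linarith)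
      linarith
    · rw [Set.indicator_of_notMem hω]
      exact putV_nonneg k (x + Y ω)
  have h1 : ∫ ω, A.indicator (fun _ => K / 2) ω ∂P ≤ ∫ ω, putV P Y K r n k (x + Y ω) ∂P := by
    apply integral_mono _ (putV_integrable hK hr hY k x) hgle
    exact (integrable_const (K / 2)).indicator hAm
  have h2 : ∫ ω, A.indicator (fun _ => K / 2) ω ∂P = (P A).toReal * (K / 2) := by
    rw [integral_indicator_const _ hAm]; simp [mul_comm]; exact Or.inl rfl
  have h3 : 0 < (P A).toReal := ENNReal.toReal_pos (hYneg _).ne' (measure_ne_top P A)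
  calc (0:ℝ) < (P A).toReal * (K / 2) := by positivity
  _ = _ := h2.symm
  _ ≤ _ := h1


lemma putG_continuous (hK : 0 < K) (hr : 0 ≤ r) (hY : Measurable Y) (k : ℕ) :
    Continuous (fun x => Real.exp (-(r / n)) * ∫ ω, putV P Y K r n k (x + Y ω) ∂P) := by
  apply continuous_const.mul
  apply continuous_of_dominated (bound := fun _ => K)
  · intro x
    exact (((putV_continuous hK hr hY k).measurable).comp
      (measurable_const.add hY)).aestronglyMeasurable
  · intro x
    filter_upwards with ω
    rw [Real.norm_eq_abs, abs_le]
    exact ⟨by linarith [putV_nonneg (P := P) (Y := Y) (K := K) (r := r) (n := n) k (x + Y ω)],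
      putV_le hK hr k _⟩
  · exact integrable_const K
  · filter_upwards with ω
    exact (putV_continuous hK hr hY k).comp (continuous_id.add continuous_const)

lemma putV_integral_le (hK : 0 < K) (hr : 0 ≤ r) (hY : Measurable Y) (k : ℕ) (x : ℝ) :
    ∫ ω, putV P Y K r n k (x + Y ω) ∂P ≤ K := by
  have := integral_mono (μ := P) (putV_integrable (n := n) hK hr hY k x) (integrable_const K)
    (fun ω => putV_le hK hr k (x + Y ω))
  simpa using this

lemma putV_exercise (hK : 0 < K) (hr : 0 < r) (hn : 1 ≤ n) (hY : Measurable Y)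
    (xb : ℕ → ℝ) (hanti : StrictAnti xb) (hxb0 : xb 0 = Real.log K)
    (hsol : ∀ k : ℕ,
      Real.exp (-(r / n)) * ∫ ω, putV P Y K r n k (xb (k + 1) + Y ω) ∂P
        = K - Real.exp (xb (k + 1)))
    (huniq : ∀ k : ℕ, ∀ z : ℝ, z < xb k →
      (Real.exp (-(r / n)) * ∫ ω, putV P Y K r n k (z + Y ω) ∂P = K - Real.exp z) →
      z = xb (k + 1))
    (k : ℕ) {z : ℝ} (hz : z ≤ xb (k + 1)) :
    putV P Y K r n (k + 1) z = K - Real.exp z ∧ putV P Y K r n k z = K - Real.exp z := by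
  have hnpos : (0:ℝ) < (n:ℝ) := by exact_mod_cast hn
  have hc1 : Real.exp (-(r / n)) < 1 := by
    rw [Real.exp_lt_one_iff]
    have : 0 < r / n := div_pos hr hnpos
    linarith
  have hcpos := Real.exp_pos (-(r / n))
  have hzlog : z < Real.log K := by
    have := hanti (Nat.succ_pos k)
    rw [hxb0] at this
    linarith
  have hez : Real.exp z < K := by
    calc Real.exp z < Real.exp (Real.log K) := Real.exp_lt_exp.mpr hzlog
    _ = K := Real.exp_log hK
  -- the continuation value is at most the exercise value at z
  have hgle : Real.exp (-(r / n)) * ∫ ω, putV P Y K r n k (z + Y ω) ∂P ≤ K - Real.exp z := by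
    rcases eq_or_lt_of_le hz with heq | hlt
    · rw [heq]; exact le_of_eq (hsol k)
    · by_contra hgt
      push_neg at hgt
      set φ : ℝ → ℝ := fun w =>
        Real.exp (-(r / n)) * (∫ ω, putV P Y K r n k (w + Y ω) ∂P) - (K - Real.exp w) with hφ
      have hφcont : Continuous φ :=
        (putG_continuous hK hr.le hY k).sub (continuous_const.sub Real.continuous_exp)
      set z₁ : ℝ := min (z - 1) (Real.log (K * (1 - Real.exp (-(r / n)))) - 1) with hz₁
      have hz₁z : z₁ ≤ z := le_trans (min_le_left _ _) (by linarith)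
      have hφz₁ : φ z₁ < 0 := by
        have h1 : Real.exp z₁ < K * (1 - Real.exp (-(r / n))) := by
          calc Real.exp z₁ ≤ Real.exp (Real.log (K * (1 - Real.exp (-(r / n)))) - 1) :=
            Real.exp_le_exp.mpr (min_le_right _ _)
          _ < Real.exp (Real.log (K * (1 - Real.exp (-(r / n))))) :=
            Real.exp_lt_exp.mpr (by linarith)
          _ = K * (1 - Real.exp (-(r / n))) := Real.exp_log (by nlinarith)
        have h2 : Real.exp (-(r / n)) * (∫ ω, putV P Y K r n k (z₁ + Y ω) ∂P)
            ≤ Real.exp (-(r / n)) * K :=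
          mul_le_mul_of_nonneg_left (putV_integral_le hK hr.le hY k z₁) hcpos.le
        simp only [hφ]
        nlinarith
      have h0mem : (0:ℝ) ∈ Set.Icc (φ z₁) (φ z) := ⟨hφz₁.le, by simp only [hφ]; linarith⟩
      obtain ⟨w, hwmem, hw0⟩ := intermediate_value_Icc hz₁z hφcont.continuousOn h0mem
      have hwlt : w < xb k := by
        have h1 := hanti (Nat.lt_succ_self k)
        have := hwmem.2
        linarith
      have hweq : w = xb (k + 1) := by
        apply huniq k w hwlt
        have : φ w = 0 := hw0
        simp only [hφ] at this
        linarith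
      have := hwmem.2
      rw [hweq] at this
      linarith
  have hmax : max (K - Real.exp z) 0 = K - Real.exp z := max_eq_left (by linarith)
  have h1 : putV P Y K r n (k + 1) z = K - Real.exp z := by
    rw [putV_succ, hmax]
    exact max_eq_left hgle
  refine ⟨h1, le_antisymm ?_ ?_⟩
  · calc putV P Y K r n k z ≤ putV P Y K r n (k + 1) z := putV_mono hK hr.le hY k z
    _ = K - Real.exp z := h1
  · calc K - Real.exp z = max (K - Real.exp z) 0 := hmax.symm
    _ ≤ putV P Y K r n k z := putV_ge k z


/-- If the continuation value strictly exceeds the exercise value at `xb k`, then it does so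
on all of `(xb (k+1), xb k]`, by the intermediate value theorem and uniqueness of the root. -/
lemma phi_pos_on (hK : 0 < K) (hr : 0 < r) (hY : Measurable Y)
    (xb : ℕ → ℝ) (hanti : StrictAnti xb)
    (huniq : ∀ k : ℕ, ∀ z : ℝ, z < xb k →
      (Real.exp (-(r / n)) * ∫ ω, putV P Y K r n k (z + Y ω) ∂P = K - Real.exp z) →
      z = xb (k + 1))
    (k : ℕ)
    (hsign : K - Real.exp (xb k) <
      Real.exp (-(r / n)) * ∫ ω, putV P Y K r n k (xb k + Y ω) ∂P)
    {z : ℝ} (hz1 : xb (k + 1) < z) (hz2 : z ≤ xb k) :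
    K - Real.exp z < Real.exp (-(r / n)) * ∫ ω, putV P Y K r n k (z + Y ω) ∂P := by
  rcases eq_or_lt_of_le hz2 with heq | hlt
  · rw [heq]; exact hsign
  · by_contra hcon
    push_neg at hcon
    rcases eq_or_lt_of_le hcon with heq2 | hlt2
    · have := huniq k z hlt heq2
      rw [this] at hz1
      exact lt_irrefl _ hz1
    · set φ : ℝ → ℝ := fun w =>
        Real.exp (-(r / n)) * (∫ ω, putV P Y K r n k (w + Y ω) ∂P) - (K - Real.exp w) with hφ
      have hφcont : Continuous φ :=
        (putG_continuous hK hr.le hY k).sub (continuous_const.sub Real.continuous_exp)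
      have h0mem : (0:ℝ) ∈ Set.Icc (φ z) (φ (xb k)) := by
        constructor
        · simp only [hφ]; linarith
        · simp only [hφ]; linarith
      obtain ⟨w, hwmem, hw0⟩ := intermediate_value_Icc hlt.le hφcont.continuousOn h0mem
      have hwne : w ≠ xb k := by
        intro h
        rw [h] at hw0
        simp only [hφ] at hw0
        linarith
      have hwlt : w < xb k := lt_of_le_of_ne hwmem.2 hwne
      have hweq : w = xb (k + 1) := by
        apply huniq k w hwlt
        simp only [hφ] at hw0
        linarith
      have := hwmem.1
      rw [hweq] at this
      linarith

/-- The strict increase of the continuation value from one step to the next, on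
`[xb (k+1), ∞)`, given the strict increase of the value functions beyond `xb (k+1)`. -/
lemma putG_strict (hK : 0 < K) (hr : 0 < r) (hn : 1 ≤ n) (hY : Measurable Y)
    (xb : ℕ → ℝ) (hanti : StrictAnti xb) (hxb0 : xb 0 = Real.log K)
    (hsol : ∀ k : ℕ,
      Real.exp (-(r / n)) * ∫ ω, putV P Y K r n k (xb (k + 1) + Y ω) ∂P
        = K - Real.exp (xb (k + 1)))
    (huniq : ∀ k : ℕ, ∀ z : ℝ, z < xb k →
      (Real.exp (-(r / n)) * ∫ ω, putV P Y K r n k (z + Y ω) ∂P = K - Real.exp z) →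
      z = xb (k + 1))
    (k : ℕ)
    (hQ2 : ∀ w, xb (k + 1) < w → putV P Y K r n k w < putV P Y K r n (k + 1) w)
    {x : ℝ} (hx : xb (k + 1) ≤ x) :
    Real.exp (-(r / n)) * ∫ ω, putV P Y K r n k (x + Y ω) ∂P <
      Real.exp (-(r / n)) * ∫ ω, putV P Y K r n (k + 1) (x + Y ω) ∂P := by
  have hint0 := putV_integrable (P := P) (Y := Y) (K := K) (r := r) (n := n) hK hr.le hY k x
  have hint1 := putV_integrable (P := P) (Y := Y) (K := K) (r := r) (n := n) hK hr.le hY (k+1) x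
  have hle : ∫ ω, putV P Y K r n k (x + Y ω) ∂P ≤ ∫ ω, putV P Y K r n (k + 1) (x + Y ω) ∂P :=
    integral_mono hint0 hint1 (fun ω => putV_mono hK hr.le hY k _)
  rcases lt_or_eq_of_le hle with hlt | heq
  · exact mul_lt_mul_of_pos_left hlt (Real.exp_pos _)
  · exfalso
    have hD : ∫ ω, (putV P Y K r n (k + 1) (x + Y ω) - putV P Y K r n k (x + Y ω)) ∂P = 0 := by
      rw [integral_sub hint1 hint0]
      linarith
    have hae : (fun ω => putV P Y K r n (k + 1) (x + Y ω) - putV P Y K r n k (x + Y ω))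
        =ᵐ[P] 0 :=
      (integral_eq_zero_iff_of_nonneg
        (fun ω => sub_nonneg.mpr (putV_mono hK hr.le hY k (x + Y ω)))
        (hint1.sub hint0)).mp hD
    have hYle : ∀ᵐ ω ∂P, x + Y ω ≤ xb (k + 1) := by
      filter_upwards [hae] with ω hω
      by_contra hcon
      push_neg at hcon
      have := hQ2 _ hcon
      simp only [Pi.zero_apply] at hω
      linarith
    have key : ∀ᵐ ω ∂P, putV P Y K r n (k + 1) (xb (k + 2) + Y ω)
        = putV P Y K r n k (xb (k + 2) + Y ω) := by
      filter_upwards [hYle] with ω hω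
      have harg : xb (k + 2) + Y ω ≤ xb (k + 1) := by
        have := hanti (Nat.lt_succ_self (k + 1))
        linarith
      obtain ⟨h1, h2⟩ := putV_exercise hK hr hn hY xb hanti hxb0 hsol huniq k harg
      rw [h1, h2]
    have hInt : ∫ ω, putV P Y K r n (k + 1) (xb (k + 2) + Y ω) ∂P
        = ∫ ω, putV P Y K r n k (xb (k + 2) + Y ω) ∂P := integral_congr_ae key
    have h2 : Real.exp (-(r / n)) * ∫ ω, putV P Y K r n k (xb (k + 2) + Y ω) ∂P
        = K - Real.exp (xb (k + 2)) := by
      rw [← hInt]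
      exact hsol (k + 1)
    have h3 := huniq k (xb (k + 2)) (hanti (by omega : k < k + 2)) h2
    have h4 := hanti (Nat.lt_succ_self (k + 1))
    rw [h3] at h4
    exact lt_irrefl _ h4

end S16aux

/-- with `(x̄_k)` the strictly decreasing sequence with `x̄_0 = log K` whose
terms solve the boundary equations, for every `k ≥ 1` and every `x > x̄_k`,
`V_k(x) > V_{k−1}(x)`. -/
theorem statement16 {Ω : Type*} [MeasurableSpace Ω] (P : Measure Ω) [IsProbabilityMeasure P]
    (K r : ℝ) (hK : 0 < K) (hr : 0 < r) (n : ℕ) (hn : 1 ≤ n)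
    (Y : Ω → ℝ) (hY : Measurable Y)
    (hYneg : ∀ y : ℝ, 0 < P {ω | Y ω < y})
    (xb : ℕ → ℝ) (hanti : StrictAnti xb) (hxb0 : xb 0 = Real.log K)
    (hsol : ∀ k : ℕ,
      Real.exp (-(r / n)) * ∫ ω, putV P Y K r n k (xb (k + 1) + Y ω) ∂P
        = K - Real.exp (xb (k + 1)))
    (huniq : ∀ k : ℕ, ∀ z : ℝ, z < xb k →
      (Real.exp (-(r / n)) * ∫ ω, putV P Y K r n k (z + Y ω) ∂P = K - Real.exp z) →
      z = xb (k + 1)) :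
    ∀ k : ℕ, ∀ x : ℝ, xb (k + 1) < x →
      putV P Y K r n k x < putV P Y K r n (k + 1) x := by
  have hrle : (0:ℝ) ≤ r := hr.le
  have Q : ∀ k : ℕ,
      (∀ z, xb (k + 1) < z → K - Real.exp z <
        Real.exp (-(r / n)) * ∫ ω, putV P Y K r n k (z + Y ω) ∂P) ∧
      (∀ x, xb (k + 1) < x → putV P Y K r n k x < putV P Y K r n (k + 1) x) := by
    intro k
    induction k with
    | zero =>
      have part1 : ∀ z, xb 1 < z → K - Real.exp z <
          Real.exp (-(r / n)) * ∫ ω, putV P Y K r n 0 (z + Y ω) ∂P := by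
        intro z hz
        rcases le_or_gt z (xb 0) with hle | hgt
        · apply phi_pos_on hK hr hY xb hanti huniq 0 ?_ hz hle
          have h0 : K - Real.exp (xb 0) = 0 := by
            rw [hxb0, Real.exp_log hK]; ring
          rw [h0]
          exact mul_pos (Real.exp_pos _) (putV_integral_pos hK hrle hY hYneg 0 (xb 0))
        · have hKe : K < Real.exp z := by
            rw [hxb0] at hgt
            calc K = Real.exp (Real.log K) := (Real.exp_log hK).symm
            _ < Real.exp z := Real.exp_lt_exp.mpr hgt
          have hpos : 0 < Real.exp (-(r / n)) * ∫ ω, putV P Y K r n 0 (z + Y ω) ∂P :=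
            mul_pos (Real.exp_pos _) (putV_integral_pos hK hrle hY hYneg 0 z)
          linarith
      refine ⟨part1, ?_⟩
      intro x hx
      have hpos : 0 < Real.exp (-(r / n)) * ∫ ω, putV P Y K r n 0 (x + Y ω) ∂P :=
        mul_pos (Real.exp_pos _) (putV_integral_pos hK hrle hY hYneg 0 x)
      calc putV P Y K r n 0 x = max (K - Real.exp x) 0 := rfl
      _ < Real.exp (-(r / n)) * ∫ ω, putV P Y K r n 0 (x + Y ω) ∂P :=
        max_lt (part1 x hx) hpos
      _ ≤ putV P Y K r n 1 x := le_max_right _ _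
    | succ k ih =>
      obtain ⟨ih1, ih2⟩ := ih
      have hsign : K - Real.exp (xb (k + 1)) <
          Real.exp (-(r / n)) * ∫ ω, putV P Y K r n (k + 1) (xb (k + 1) + Y ω) ∂P := by
        have h := putG_strict hK hr hn hY xb hanti hxb0 hsol huniq k ih2
          (le_refl (xb (k + 1)))
        rw [hsol k] at h
        exact h
      have part1 : ∀ z, xb (k + 2) < z → K - Real.exp z <
          Real.exp (-(r / n)) * ∫ ω, putV P Y K r n (k + 1) (z + Y ω) ∂P := by
        intro z hz
        rcases le_or_gt z (xb (k + 1)) with hle | hgt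
        · exact phi_pos_on hK hr hY xb hanti huniq (k + 1) hsign hz hle
        · calc K - Real.exp z
              < Real.exp (-(r / n)) * ∫ ω, putV P Y K r n k (z + Y ω) ∂P := ih1 z hgt
          _ ≤ Real.exp (-(r / n)) * ∫ ω, putV P Y K r n (k + 1) (z + Y ω) ∂P :=
            mul_le_mul_of_nonneg_left
              (integral_mono (putV_integrable hK hrle hY k z)
                (putV_integrable hK hrle hY (k + 1) z)
                (fun ω => putV_mono hK hrle hY k _)) (Real.exp_pos _).le
      refine ⟨part1, ?_⟩
      intro x hx
      have hfx : max (K - Real.exp x) 0 <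
          Real.exp (-(r / n)) * ∫ ω, putV P Y K r n (k + 1) (x + Y ω) ∂P :=
        max_lt (part1 x hx)
          (mul_pos (Real.exp_pos _) (putV_integral_pos hK hrle hY hYneg (k + 1) x))
      have hlast : Real.exp (-(r / n)) * ∫ ω, putV P Y K r n (k + 1) (x + Y ω) ∂P
          ≤ putV P Y K r n (k + 2) x := le_max_right _ _
      rcases le_or_gt x (xb (k + 1)) with hle | hgt
      · obtain ⟨h1, _⟩ := putV_exercise hK hr hn hY xb hanti hxb0 hsol huniq k hle
        calc putV P Y K r n (k + 1) x = K - Real.exp x := h1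
        _ ≤ max (K - Real.exp x) 0 := le_max_left _ _
        _ < Real.exp (-(r / n)) * ∫ ω, putV P Y K r n (k + 1) (x + Y ω) ∂P := hfx
        _ ≤ putV P Y K r n (k + 2) x := hlast
      · have hgg := putG_strict hK hr hn hY xb hanti hxb0 hsol huniq k ih2 hgt.le
        calc putV P Y K r n (k + 1) x
            = max (max (K - Real.exp x) 0)
              (Real.exp (-(r / n)) * ∫ ω, putV P Y K r n k (x + Y ω) ∂P) := rfl
        _ < Real.exp (-(r / n)) * ∫ ω, putV P Y K r n (k + 1) (x + Y ω) ∂P :=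
          max_lt hfx hgg
        _ ≤ putV P Y K r n (k + 2) x := hlast
  exact fun k x hx => (Q k).2 x hx
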